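/- Assume n ≥ 17 and τ ∈ ℝ. Then for every ε > 0: ∫_0^∞ ε^{n−2} (ε² + r²)^{−n} r^{n+5} [ 2 f(r²) f′(r²) + r² f′(r²)² ] dr = J(ε²) · ∫_0^∞ (1 + r²)^{−n} r^{n+9} dr, where J(s) = 10·((n−10)/(n+8))·((n−8)/(n+6))·τ s² + ((n−10)/(n+8))·(75 − 4τ) s³ + ( (3/10)τ − 50 ) s⁴ + (23/2)·((n+10)/(n−12)) s⁵ − (11/10)·((n+10)/(n−12))·((n+12)/(n−14)) s⁶ + (3/80)·((n+10)/(n−12))·((n+12)/(n−14))·((n+14)/(n−16)) s⁷. -/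

import Mathlib

open MeasureTheory

/-- The cut-off profile `f(s) = τ + 5s − s² + s³/20`. -/
noncomputable def fpoly (τ s : ℝ) : ℝ := τ + 5 * s - s ^ 2 + s ^ 3 / 20

/-- The polynomial `J(s)` from Proposition 12 of the paper. -/
noncomputable def Jpoly (n : ℕ) (τ s : ℝ) : ℝ :=
  10 * (((n : ℝ) - 10) / ((n : ℝ) + 8)) * (((n : ℝ) - 8) / ((n : ℝ) + 6)) * τ * s ^ 2
    + (((n : ℝ) - 10) / ((n : ℝ) + 8)) * (75 - 4 * τ) * s ^ 3
    + ((3 / 10) * τ - 50) * s ^ 4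
    + (23 / 2) * (((n : ℝ) + 10) / ((n : ℝ) - 12)) * s ^ 5
    - (11 / 10) * (((n : ℝ) + 10) / ((n : ℝ) - 12)) * (((n : ℝ) + 12) / ((n : ℝ) - 14)) * s ^ 6
    + (3 / 80) * (((n : ℝ) + 10) / ((n : ℝ) - 12)) * (((n : ℝ) + 12) / ((n : ℝ) - 14)) *
        (((n : ℝ) + 14) / ((n : ℝ) - 16)) * s ^ 7

open Set Real Filter

lemma aux_integrable (n p : ℕ) (ε : ℝ) (hε : 0 < ε) (hp : (p:ℝ) < 2*n - 1) :
    IntegrableOn (fun r : ℝ => (ε^2 + r^2) ^ (-(n:ℝ)) * r ^ p) (Ioi 0) := by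
  have hcont : Continuous (fun r : ℝ => (ε^2 + r^2) ^ (-(n:ℝ)) * r ^ p) := by
    apply Continuous.mul _ (continuous_pow p)
    apply Continuous.rpow_const (by continuity)
    intro x
    left
    positivity
  have h1 : IntegrableOn (fun r : ℝ => (ε^2 + r^2) ^ (-(n:ℝ)) * r ^ p) (Ioc 0 1) :=
    (hcont.integrableOn_Icc (a := 0) (b := 1)).mono_set Ioc_subset_Icc_self
  have h2 : IntegrableOn (fun r : ℝ => (ε^2 + r^2) ^ (-(n:ℝ)) * r ^ p) (Ioi 1) := by
    have hbase : IntegrableOn (fun r : ℝ => r ^ ((p:ℝ) - 2*n)) (Ioi 1) :=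
      integrableOn_Ioi_rpow_of_lt (by linarith) one_pos
    refine hbase.integrable.mono' hcont.aestronglyMeasurable ?_
    filter_upwards [ae_restrict_mem measurableSet_Ioi] with r hr
    have hr1 : (1:ℝ) < r := hr
    have hr0 : (0:ℝ) < r := by linarith
    rw [norm_mul, norm_of_nonneg (rpow_nonneg (by positivity) _),
      norm_of_nonneg (by positivity)]
    have hb : (ε^2 + r^2) ^ (-(n:ℝ)) ≤ (r^2) ^ (-(n:ℝ)) :=
      rpow_le_rpow_of_nonpos (by positivity) (by nlinarith) (neg_nonpos.mpr (Nat.cast_nonneg n))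
    calc (ε^2 + r^2) ^ (-(n:ℝ)) * r ^ p ≤ (r^2) ^ (-(n:ℝ)) * r ^ p := by
          exact mul_le_mul_of_nonneg_right hb (pow_nonneg hr0.le p)
      _ = r ^ ((p:ℝ) - 2*n) := by
          rw [← rpow_natCast r p, ← rpow_natCast r 2, ← rpow_mul hr0.le, ← rpow_add hr0]
          ring_nf
  have := h1.union h2
  rwa [Ioc_union_Ioi_eq_Ioi zero_le_one] at this

lemma rec_step (n p : ℕ) (ε : ℝ) (hε : 0 < ε) (hp : (p:ℝ) + 4 ≤ 2*n) :
    (2*(n:ℝ) - ((p:ℝ)+3)) * ∫ r in Ioi (0:ℝ), (ε^2 + r^2) ^ (-(n:ℝ)) * r ^ (p+2)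
      = ((p:ℝ)+1) * ε^2 * ∫ r in Ioi (0:ℝ), (ε^2 + r^2) ^ (-(n:ℝ)) * r ^ p := by
  set F : ℝ → ℝ := fun r => r ^ (p+1) * (ε^2 + r^2) ^ (1-(n:ℝ)) with hF
  set F' : ℝ → ℝ := fun r =>
    ((p:ℝ)+1) * ε^2 * ((ε^2 + r^2) ^ (-(n:ℝ)) * r ^ p)
      + (((p:ℝ)+3) - 2*n) * ((ε^2 + r^2) ^ (-(n:ℝ)) * r ^ (p+2)) with hF'
  have hpos : ∀ r : ℝ, (0:ℝ) < ε^2 + r^2 := fun r => by positivity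
  have hderiv : ∀ x : ℝ, HasDerivAt F (F' x) x := by
    intro x
    have h1 : HasDerivAt (fun r : ℝ => r ^ (p+1)) (((p:ℝ)+1) * x ^ p) x := by
      simpa using hasDerivAt_pow (p+1) x
    have h2 : HasDerivAt (fun r : ℝ => ε^2 + r^2) (2*x) x := by
      simpa using ((hasDerivAt_pow 2 x).const_add (ε^2))
    have h3 : HasDerivAt (fun r : ℝ => (ε^2 + r^2) ^ (1-(n:ℝ)))
        ((2*x) * (1-(n:ℝ)) * (ε^2 + x^2) ^ ((1-(n:ℝ))-1)) x :=
      h2.rpow_const (Or.inl (hpos x).ne')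
    have h4 := h1.mul h3
    refine h4.congr_deriv ?_
    have e1 : (ε^2 + x^2) ^ ((1-(n:ℝ))-1) = (ε^2 + x^2) ^ (-(n:ℝ)) := by norm_num
    have e2 : (ε^2 + x^2) ^ (1-(n:ℝ)) = (ε^2 + x^2) * (ε^2 + x^2) ^ (-(n:ℝ)) := by
      rw [show (1-(n:ℝ)) = 1 + -(n:ℝ) by ring, rpow_add (hpos x), rpow_one]
    rw [hF', e1, e2]
    ring
  have hi1 : IntegrableOn (fun r : ℝ => (ε^2 + r^2) ^ (-(n:ℝ)) * r ^ p) (Ioi 0) :=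
    aux_integrable n p ε hε (by linarith)
  have hi2 : IntegrableOn (fun r : ℝ => (ε^2 + r^2) ^ (-(n:ℝ)) * r ^ (p+2)) (Ioi 0) :=
    aux_integrable n (p+2) ε hε (by push_cast; linarith)
  have hF'int : IntegrableOn F' (Ioi 0) := by
    apply Integrable.add
    · exact hi1.const_mul _
    · exact hi2.const_mul _
  have htend : Tendsto F atTop (nhds 0) := by
    have hb : Tendsto (fun x : ℝ => x ^ (((p:ℝ)+3) - 2*n)) atTop (nhds 0) := by
      have := tendsto_rpow_neg_atTop (y := 2*(n:ℝ) - ((p:ℝ)+3)) (by linarith)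
      simpa [neg_sub] using this
    apply squeeze_zero' (g := fun x : ℝ => x ^ (((p:ℝ)+3) - 2*n))
    · filter_upwards [eventually_ge_atTop (1:ℝ)] with x hx
      positivity
    · filter_upwards [eventually_ge_atTop (1:ℝ)] with x hx
      have hx0 : (0:ℝ) < x := by linarith
      have hb2 : (ε^2 + x^2) ^ (1-(n:ℝ)) ≤ (x^2) ^ (1-(n:ℝ)) :=
        rpow_le_rpow_of_nonpos (by positivity) (by nlinarith) (by push_cast; linarith)
      calc F x ≤ x ^ (p+1) * (x^2) ^ (1-(n:ℝ)) :=
            mul_le_mul_of_nonneg_left hb2 (pow_nonneg hx0.le _)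
        _ = x ^ (((p:ℝ)+3) - 2*n) := by
            rw [← rpow_natCast x (p+1), ← rpow_natCast x 2, ← rpow_mul hx0.le,
              ← rpow_add hx0]
            push_cast; ring_nf
    · exact hb
  have hzero : ∫ r in Ioi (0:ℝ), F' r = 0 := by
    have := integral_Ioi_of_hasDerivAt_of_tendsto' (f := F) (f' := F') (a := 0)
      (fun x _ => hderiv x) hF'int htend
    simpa [hF] using this
  have hsplit : ∫ r in Ioi (0:ℝ), F' r
      = ((p:ℝ)+1) * ε^2 * (∫ r in Ioi (0:ℝ), (ε^2 + r^2) ^ (-(n:ℝ)) * r ^ p)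
        + (((p:ℝ)+3) - 2*n) * (∫ r in Ioi (0:ℝ), (ε^2 + r^2) ^ (-(n:ℝ)) * r ^ (p+2)) := by
    rw [hF']
    rw [integral_add (hi1.const_mul _) (hi2.const_mul _), integral_const_mul, integral_const_mul]
  rw [hzero] at hsplit
  linarith [hsplit]

lemma scaling (n q : ℕ) (ε : ℝ) (hε : 0 < ε) :
    ∫ r in Ioi (0:ℝ), (ε^2 + r^2) ^ (-(n:ℝ)) * r ^ q
      = ε^(q+1) * (ε^(2*n))⁻¹ * ∫ r in Ioi (0:ℝ), (1 + r^2) ^ (-(n:ℝ)) * r ^ q := by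
  have h := integral_comp_mul_left_Ioi
    (fun r : ℝ => (ε^2 + r^2) ^ (-(n:ℝ)) * r ^ q) 0 hε
  rw [mul_zero] at h
  have h2 : ∀ x ∈ Ioi (0:ℝ),
      (ε^2 + (ε*x)^2) ^ (-(n:ℝ)) * (ε*x) ^ q
        = (ε^q * (ε^(2*n))⁻¹) * ((1 + x^2) ^ (-(n:ℝ)) * x ^ q) := by
    intro x hx
    have e1 : ε^2 + (ε*x)^2 = ε^2 * (1 + x^2) := by ring
    have hx2 : (0:ℝ) < 1 + x^2 := by positivity
    rw [e1, mul_rpow (by positivity) hx2.le, mul_pow]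
    have e2 : (ε^2 : ℝ) ^ (-(n:ℝ)) = (ε^(2*n))⁻¹ := by
      rw [rpow_neg (by positivity), rpow_natCast, ← pow_mul]
    rw [e2]
    ring
  rw [setIntegral_congr_fun measurableSet_Ioi h2, integral_const_mul] at h
  rw [smul_eq_mul] at h
  have h4 : ε⁻¹ * ∫ x in Ioi (0:ℝ), (ε^2 + x^2) ^ (-(n:ℝ)) * x ^ q
      = ε^q * (ε^(2*n))⁻¹ * ∫ x in Ioi (0:ℝ), (1 + x^2) ^ (-(n:ℝ)) * x ^ q := by
    simpa using h.symm
  rw [show ε^(q+1) * (ε^(2*n))⁻¹ * (∫ r in Ioi (0:ℝ), (1 + r^2) ^ (-(n:ℝ)) * r ^ q)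
      = ε * (ε^q * (ε^(2*n))⁻¹ * ∫ x in Ioi (0:ℝ), (1 + x^2) ^ (-(n:ℝ)) * x ^ q) by
    rw [pow_succ]; ring]
  rw [← h4, ← mul_assoc, mul_inv_cancel₀ hε.ne', one_mul]

set_option maxHeartbeats 2000000 in
lemma final_algebra (n : ℕ) (hn : 17 ≤ n) (τ ε B I0 I1 I2 I3 I4 I5 : ℝ) (hε : 0 < ε)
    (R1 : ((n:ℝ)-8) * I1 = ((n:ℝ)+6) * ε^2 * I0)
    (R2 : ((n:ℝ)-10) * I2 = ((n:ℝ)+8) * ε^2 * I1)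
    (R3 : ((n:ℝ)-12) * I3 = ((n:ℝ)+10) * ε^2 * I2)
    (R4 : ((n:ℝ)-14) * I4 = ((n:ℝ)+12) * ε^2 * I3)
    (R5 : ((n:ℝ)-16) * I5 = ((n:ℝ)+14) * ε^2 * I4)
    (hS : I2 = ε^(n+10) * (ε^(2*n))⁻¹ * B) :
    ε^(n-2) * (10*τ*I0 + (75-4*τ)*I1 + ((3/10)*τ-50)*I2
        + (23/2)*I3 + (-(11/10))*I4 + (3/80)*I5)
      = Jpoly n τ (ε^2) * B := by
  have hcast : (17:ℝ) ≤ (n:ℝ) := by exact_mod_cast hn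
  have hε0 : ε ≠ 0 := hε.ne'
  have hε2 : (ε:ℝ)^2 ≠ 0 := pow_ne_zero _ hε0
  have h6 : ((n:ℝ)+6) ≠ 0 := by linarith
  have h8 : ((n:ℝ)+8) ≠ 0 := by linarith
  have h12 : ((n:ℝ)-12) ≠ 0 := by linarith
  have h14 : ((n:ℝ)-14) ≠ 0 := by linarith
  have h16 : ((n:ℝ)-16) ≠ 0 := by linarith
  have h1 : ε^(n-2) = ε^8 * ε^(n-10) := by rw [← pow_add]; congr 1; omega
  have h2 : ε^(2*n) = ε^(n+10) * ε^(n-10) := by rw [← pow_add]; congr 1; omega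
  have hp10 : (ε:ℝ)^(n+10) ≠ 0 := pow_ne_zero _ hε0
  have hq10 : (ε:ℝ)^(n-10) ≠ 0 := pow_ne_zero _ hε0
  have hB : B = ε^(n-10) * I2 := by
    rw [h2, mul_inv, ← mul_assoc, mul_inv_cancel₀ hp10, one_mul] at hS
    rw [hS, ← mul_assoc, mul_inv_cancel₀ hq10, one_mul]
  have hI1 : I1 = ((n:ℝ)-10) * I2 / (((n:ℝ)+8) * ε^2) := by
    field_simp
    linarith [R2]
  have hI0 : I0 = ((n:ℝ)-8) * I1 / (((n:ℝ)+6) * ε^2) := by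
    field_simp
    linarith [R1]
  have hI3 : I3 = ((n:ℝ)+10) * ε^2 * I2 / ((n:ℝ)-12) := by
    field_simp
    linarith [R3]
  have hI4 : I4 = ((n:ℝ)+12) * ε^2 * I3 / ((n:ℝ)-14) := by
    field_simp
    linarith [R4]
  have hI5 : I5 = ((n:ℝ)+14) * ε^2 * I4 / ((n:ℝ)-16) := by
    field_simp
    linarith [R5]
  rw [hI5, hI4, hI3, hI0, hI1, hB, h1, Jpoly]
  field_simp
  ring

lemma fpoly_deriv (τ x : ℝ) : deriv (fpoly τ) x = 5 - 2*x + 3*x^2/20 := by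
  have h1 : HasDerivAt (fpoly τ) (0 + 5*1 - (↑2 * x^(2-1)) + (↑3 * x^(3-1))/20) x := by
    unfold fpoly
    exact (((hasDerivAt_const x τ).add ((hasDerivAt_id x).const_mul 5)).sub
      (hasDerivAt_pow 2 x)).add ((hasDerivAt_pow 3 x).div_const 20)
  rw [h1.deriv]
  norm_num

theorem stmt_16 (n : ℕ) (hn : 17 ≤ n) (τ : ℝ) (ε : ℝ) (hε : 0 < ε) :
    ∫ r in Set.Ioi (0 : ℝ),
        ε ^ (n - 2) * (ε ^ 2 + r ^ 2) ^ (-(n : ℝ)) * r ^ (n + 5) *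
          (2 * fpoly τ (r ^ 2) * deriv (fpoly τ) (r ^ 2)
            + r ^ 2 * (deriv (fpoly τ) (r ^ 2)) ^ 2)
      = Jpoly n τ (ε ^ 2) *
          ∫ r in Set.Ioi (0 : ℝ), (1 + r ^ 2) ^ (-(n : ℝ)) * r ^ (n + 9) := by
  have hn' : (17:ℝ) ≤ (n:ℝ) := by exact_mod_cast hn
  have hint : ∀ q : ℕ, (q:ℝ) < 2*(n:ℝ) - 1 →
      IntegrableOn (fun r : ℝ => (ε^2 + r^2) ^ (-(n:ℝ)) * r ^ q) (Ioi 0) :=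
    fun q hq => aux_integrable n q ε hε hq
  have i0 := hint (n+5) (by push_cast; linarith)
  have i1 := hint (n+7) (by push_cast; linarith)
  have i2 := hint (n+9) (by push_cast; linarith)
  have i3 := hint (n+11) (by push_cast; linarith)
  have i4 := hint (n+13) (by push_cast; linarith)
  have i5 := hint (n+15) (by push_cast; linarith)
  have hcongr : ∀ r ∈ Ioi (0:ℝ),
      ε ^ (n - 2) * (ε ^ 2 + r ^ 2) ^ (-(n : ℝ)) * r ^ (n + 5) *
          (2 * fpoly τ (r ^ 2) * deriv (fpoly τ) (r ^ 2)
            + r ^ 2 * (deriv (fpoly τ) (r ^ 2)) ^ 2)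
        = ε ^ (n-2) *
            (10*τ * ((ε^2 + r^2) ^ (-(n:ℝ)) * r ^ (n+5))
              + (75-4*τ) * ((ε^2 + r^2) ^ (-(n:ℝ)) * r ^ (n+7))
              + ((3/10)*τ-50) * ((ε^2 + r^2) ^ (-(n:ℝ)) * r ^ (n+9))
              + (23/2) * ((ε^2 + r^2) ^ (-(n:ℝ)) * r ^ (n+11))
              + (-(11/10)) * ((ε^2 + r^2) ^ (-(n:ℝ)) * r ^ (n+13))
              + (3/80) * ((ε^2 + r^2) ^ (-(n:ℝ)) * r ^ (n+15))) := by
    intro r _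
    rw [fpoly_deriv]
    unfold fpoly
    rw [show n+7 = n+5+2 by omega, show n+9 = n+5+4 by omega,
      show n+11 = n+5+6 by omega, show n+13 = n+5+8 by omega,
      show n+15 = n+5+10 by omega, pow_add, pow_add, pow_add, pow_add, pow_add]
    ring
  have j0 : IntegrableOn (fun r : ℝ => 10*τ * ((ε^2 + r^2) ^ (-(n:ℝ)) * r ^ (n+5))) (Ioi 0) :=
    i0.const_mul _
  have j1 : IntegrableOn (fun r : ℝ => (75-4*τ) * ((ε^2 + r^2) ^ (-(n:ℝ)) * r ^ (n+7))) (Ioi 0) :=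
    i1.const_mul _
  have j2 : IntegrableOn (fun r : ℝ => ((3/10)*τ-50) * ((ε^2 + r^2) ^ (-(n:ℝ)) * r ^ (n+9))) (Ioi 0) :=
    i2.const_mul _
  have j3 : IntegrableOn (fun r : ℝ => (23/2) * ((ε^2 + r^2) ^ (-(n:ℝ)) * r ^ (n+11))) (Ioi 0) :=
    i3.const_mul _
  have j4 : IntegrableOn (fun r : ℝ => (-(11/10)) * ((ε^2 + r^2) ^ (-(n:ℝ)) * r ^ (n+13))) (Ioi 0) :=
    i4.const_mul _
  have j5 : IntegrableOn (fun r : ℝ => (3/80) * ((ε^2 + r^2) ^ (-(n:ℝ)) * r ^ (n+15))) (Ioi 0) :=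
    i5.const_mul _
  have s2 : IntegrableOn (fun r : ℝ => 10*τ * ((ε^2 + r^2) ^ (-(n:ℝ)) * r ^ (n+5)) + (75-4*τ) * ((ε^2 + r^2) ^ (-(n:ℝ)) * r ^ (n+7))) (Ioi 0) := j0.add j1
  have s3 : IntegrableOn (fun r : ℝ => 10*τ * ((ε^2 + r^2) ^ (-(n:ℝ)) * r ^ (n+5)) + (75-4*τ) * ((ε^2 + r^2) ^ (-(n:ℝ)) * r ^ (n+7)) + ((3/10)*τ-50) * ((ε^2 + r^2) ^ (-(n:ℝ)) * r ^ (n+9))) (Ioi 0) := s2.add j2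
  have s4 : IntegrableOn (fun r : ℝ => 10*τ * ((ε^2 + r^2) ^ (-(n:ℝ)) * r ^ (n+5)) + (75-4*τ) * ((ε^2 + r^2) ^ (-(n:ℝ)) * r ^ (n+7)) + ((3/10)*τ-50) * ((ε^2 + r^2) ^ (-(n:ℝ)) * r ^ (n+9)) + (23/2) * ((ε^2 + r^2) ^ (-(n:ℝ)) * r ^ (n+11))) (Ioi 0) := s3.add j3
  have s5 : IntegrableOn (fun r : ℝ => 10*τ * ((ε^2 + r^2) ^ (-(n:ℝ)) * r ^ (n+5)) + (75-4*τ) * ((ε^2 + r^2) ^ (-(n:ℝ)) * r ^ (n+7)) + ((3/10)*τ-50) * ((ε^2 + r^2) ^ (-(n:ℝ)) * r ^ (n+9)) + (23/2) * ((ε^2 + r^2) ^ (-(n:ℝ)) * r ^ (n+11)) + (-(11/10)) * ((ε^2 + r^2) ^ (-(n:ℝ)) * r ^ (n+13))) (Ioi 0) := s4.add j4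
  rw [setIntegral_congr_fun measurableSet_Ioi hcongr, integral_const_mul,
    integral_add s5 j5, integral_add s4 j4, integral_add s3 j3, integral_add s2 j2,
    integral_add j0 j1,
    integral_const_mul, integral_const_mul, integral_const_mul, integral_const_mul,
    integral_const_mul, integral_const_mul]
  have R1 : ((n:ℝ)-8) * ∫ r in Ioi (0:ℝ), (ε^2 + r^2) ^ (-(n:ℝ)) * r ^ (n+7)
      = ((n:ℝ)+6) * ε^2 * ∫ r in Ioi (0:ℝ), (ε^2 + r^2) ^ (-(n:ℝ)) * r ^ (n+5) := by
    have h := rec_step n (n+5) ε hε (by push_cast; linarith)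
    rw [show n+5+2 = n+7 by omega] at h
    push_cast at h
    linear_combination h
  have R2 : ((n:ℝ)-10) * ∫ r in Ioi (0:ℝ), (ε^2 + r^2) ^ (-(n:ℝ)) * r ^ (n+9)
      = ((n:ℝ)+8) * ε^2 * ∫ r in Ioi (0:ℝ), (ε^2 + r^2) ^ (-(n:ℝ)) * r ^ (n+7) := by
    have h := rec_step n (n+7) ε hε (by push_cast; linarith)
    rw [show n+7+2 = n+9 by omega] at h
    push_cast at h
    linear_combination h
  have R3 : ((n:ℝ)-12) * ∫ r in Ioi (0:ℝ), (ε^2 + r^2) ^ (-(n:ℝ)) * r ^ (n+11)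
      = ((n:ℝ)+10) * ε^2 * ∫ r in Ioi (0:ℝ), (ε^2 + r^2) ^ (-(n:ℝ)) * r ^ (n+9) := by
    have h := rec_step n (n+9) ε hε (by push_cast; linarith)
    rw [show n+9+2 = n+11 by omega] at h
    push_cast at h
    linear_combination h
  have R4 : ((n:ℝ)-14) * ∫ r in Ioi (0:ℝ), (ε^2 + r^2) ^ (-(n:ℝ)) * r ^ (n+13)
      = ((n:ℝ)+12) * ε^2 * ∫ r in Ioi (0:ℝ), (ε^2 + r^2) ^ (-(n:ℝ)) * r ^ (n+11) := by
    have h := rec_step n (n+11) ε hε (by push_cast; linarith)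
    rw [show n+11+2 = n+13 by omega] at h
    push_cast at h
    linear_combination h
  have R5 : ((n:ℝ)-16) * ∫ r in Ioi (0:ℝ), (ε^2 + r^2) ^ (-(n:ℝ)) * r ^ (n+15)
      = ((n:ℝ)+14) * ε^2 * ∫ r in Ioi (0:ℝ), (ε^2 + r^2) ^ (-(n:ℝ)) * r ^ (n+13) := by
    have h := rec_step n (n+13) ε hε (by push_cast; linarith)
    rw [show n+13+2 = n+15 by omega] at h
    push_cast at h
    linear_combination h
  have hS : (∫ r in Ioi (0:ℝ), (ε^2 + r^2) ^ (-(n:ℝ)) * r ^ (n+9))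
      = ε^(n+10) * (ε^(2*n))⁻¹ * ∫ r in Ioi (0:ℝ), (1 + r^2) ^ (-(n:ℝ)) * r ^ (n+9) := by
    have h := scaling n (n+9) ε hε
    rwa [show n+9+1 = n+10 by omega] at h
  exact final_algebra n hn τ ε _ _ _ _ _ _ _ hε R1 R2 R3 R4 R5 hS
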